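/- For every integer K ≥ 1 and every p with 1 ≤ p ≤ ∞, the p-norm network distance d_{D,p} restricted to K-order dissimilarity networks is a metric on the space of K-order dissimilarity networks modulo isomorphism: it is nonnegative, symmetric, satisfies the triangle inequality, and d_{D,p}(D_X,D_Y) = 0 holds if and only if D_X and D_Y are isomorphic. -/
import Mathlib


open scoped ENNReal

/-- A correspondence between node sets `X` and `Y`: a set of pairs in which every
`x : X` and every `y : Y` appears. -/
def IsCorrespondence {X Y : Type} (C : Set (X × Y)) : Prop :=
  (∀ x : X, ∃ y : Y, (x, y) ∈ C) ∧ (∀ y : Y, ∃ x : X, (x, y) ∈ C)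

/-- The rank of a tuple: the number of distinct elements appearing in it. -/
noncomputable def tupleRank {X : Type} {n : ℕ} (t : Fin n → X) : ℕ :=
  Set.ncard (Set.range t)

/-- A `K`-order network on a finite nonempty node set `X`: relationship functions
`r k : X^{k+1} → [0,1]` for `0 ≤ k ≤ K`, symmetric under permutations of the arguments,
and such that any subtuple with the same set of distinct elements as the full tuple
carries the same relationship value. -/
structure HONetwork (K : ℕ) (X : Type) [Fintype X] [Nonempty X] : Type where
  r : ∀ k : ℕ, (Fin (k + 1) → X) → ℝ
  r_nonneg : ∀ k, k ≤ K → ∀ t : Fin (k + 1) → X, 0 ≤ r k t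
  r_le_one : ∀ k, k ≤ K → ∀ t : Fin (k + 1) → X, r k t ≤ 1
  symm : ∀ k, k ≤ K → ∀ (t : Fin (k + 1) → X) (σ : Equiv.Perm (Fin (k + 1))),
    r k (t ∘ σ) = r k t
  identity : ∀ k, k ≤ K → ∀ k', k' ≤ K → ∀ (t : Fin (k + 1) → X)
    (ι : Fin (k' + 1) → Fin (k + 1)), StrictMono ι →
    Set.range (t ∘ ι) = Set.range t → r k' (t ∘ ι) = r k t

/-- The `k`-order network difference `Γ^k_{X,Y}(C)`: the largest value of
`|r_X^k(x_{0:k}) − r_Y^k(y_{0:k})|` over tuples of pairs of correspondents in `C`. -/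
noncomputable def Gamma {K : ℕ} {X Y : Type} [Fintype X] [Nonempty X] [Fintype Y] [Nonempty Y]
    (NX : HONetwork K X) (NY : HONetwork K Y) (k : ℕ) (C : Set (X × Y)) : ℝ :=
  sSup { v : ℝ | ∃ (tx : Fin (k + 1) → X) (ty : Fin (k + 1) → Y),
    (∀ i, (tx i, ty i) ∈ C) ∧ v = |NX.r k tx - NY.r k ty| }

/-- The `k`-order network distance: minimum of `Γ^k_{X,Y}(C)` over correspondences `C`. -/
noncomputable def dN {K : ℕ} {X Y : Type} [Fintype X] [Nonempty X] [Fintype Y] [Nonempty Y]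
    (k : ℕ) (NX : HONetwork K X) (NY : HONetwork K Y) : ℝ :=
  sInf { v : ℝ | ∃ C : Set (X × Y), IsCorrespondence C ∧ v = Gamma NX NY k C }

/-- The `p`-norm of a vector in `ℝ^{K+1}`, `1 ≤ p ≤ ∞`. -/
noncomputable def pNorm (K : ℕ) (p : ℝ≥0∞) [Fact (1 ≤ p)] (v : Fin (K + 1) → ℝ) : ℝ :=
  ‖(WithLp.equiv p (Fin (K + 1) → ℝ)).symm v‖

/-- The `p`-norm network distance: minimum over correspondences `C` of the `p`-norm of the
vector `(Γ^0_{X,Y}(C), …, Γ^K_{X,Y}(C))`. -/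
noncomputable def dNp {K : ℕ} {X Y : Type} [Fintype X] [Nonempty X] [Fintype Y] [Nonempty Y]
    (p : ℝ≥0∞) [Fact (1 ≤ p)] (NX : HONetwork K X) (NY : HONetwork K Y) : ℝ :=
  sInf { v : ℝ | ∃ C : Set (X × Y), IsCorrespondence C ∧
    v = pNorm K p (fun k : Fin (K + 1) => Gamma NX NY (k : ℕ) C) }

/-- Two `K`-order networks are `k`-isomorphic if a bijection of the node sets preserves the
`k`-order relationship functions. -/
def kIsomorphic {K : ℕ} {X Y : Type} [Fintype X] [Nonempty X] [Fintype Y] [Nonempty Y]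
    (k : ℕ) (NX : HONetwork K X) (NY : HONetwork K Y) : Prop :=
  ∃ φ : X ≃ Y, ∀ t : Fin (k + 1) → X, NY.r k (fun i => φ (t i)) = NX.r k t

/-- Two `K`-order networks are isomorphic if a bijection of the node sets preserves the
`k`-order relationship functions for all `0 ≤ k ≤ K`. -/
def Isomorphic {K : ℕ} {X Y : Type} [Fintype X] [Nonempty X] [Fintype Y] [Nonempty Y]
    (NX : HONetwork K X) (NY : HONetwork K Y) : Prop :=
  ∃ φ : X ≃ Y, ∀ k, k ≤ K → ∀ t : Fin (k + 1) → X, NY.r k (fun i => φ (t i)) = NX.r k t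

/-- A `K`-order dissimilarity network: a `K`-order network whose relationship functions
decompose as `r^k = d^k + ε · rank`, with nonnegative dissimilarity functions `d^k`
satisfying the order increasing property, and `0 < ε ≤ 1 − (1/K) · max d^K`. -/
structure DissimNetwork (K : ℕ) (X : Type) [Fintype X] [Nonempty X]
    extends HONetwork K X where
  dfun : ∀ k : ℕ, (Fin (k + 1) → X) → ℝ
  eps : ℝ
  dfun_nonneg : ∀ k, k ≤ K → ∀ t : Fin (k + 1) → X, 0 ≤ dfun k t
  decomp : ∀ k, k ≤ K → ∀ t : Fin (k + 1) → X,
    r k t = dfun k t + eps * (tupleRank t : ℝ)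
  order_incr : ∀ k : ℕ, k + 1 ≤ K → ∀ t : Fin (k + 2) → X,
    dfun k (fun i : Fin (k + 1) => t i.castSucc) ≤ dfun (k + 1) t
  eps_pos : 0 < eps
  eps_le : ∀ t : Fin (K + 1) → X, eps ≤ 1 - (1 / (K : ℝ)) * dfun K t

/-- A `K`-order proximity network: a `K`-order network whose relationship functions
decompose as `r^k = p^k − ε · rank`, with nonnegative proximity functions `p^k`
satisfying the order decreasing property, and `0 < ε ≤ (1/K) · min p^K`. -/
structure ProxNetwork (K : ℕ) (X : Type) [Fintype X] [Nonempty X]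
    extends HONetwork K X where
  pfun : ∀ k : ℕ, (Fin (k + 1) → X) → ℝ
  eps : ℝ
  pfun_nonneg : ∀ k, k ≤ K → ∀ t : Fin (k + 1) → X, 0 ≤ pfun k t
  decomp : ∀ k, k ≤ K → ∀ t : Fin (k + 1) → X,
    r k t = pfun k t - eps * (tupleRank t : ℝ)
  order_decr : ∀ k : ℕ, k + 1 ≤ K → ∀ t : Fin (k + 2) → X,
    pfun (k + 1) t ≤ pfun k (fun i : Fin (k + 1) => t i.castSucc)
  eps_pos : 0 < eps
  eps_le : ∀ t : Fin (K + 1) → X, eps ≤ (1 / (K : ℝ)) * pfun K t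

section Aux
open Classical
variable {K : ℕ} {X Y Z : Type} [Fintype X] [Nonempty X] [Fintype Y] [Nonempty Y]
  [Fintype Z] [Nonempty Z]

lemma gamma_nonneg (NX : HONetwork K X) (NY : HONetwork K Y) (k : ℕ) (C : Set (X × Y)) :
    0 ≤ Gamma NX NY k C :=
  Real.sSup_nonneg (by rintro v ⟨tx, ty, -, rfl⟩; positivity)

lemma gamma_bddAbove (NX : HONetwork K X) (NY : HONetwork K Y) {k : ℕ} (hk : k ≤ K)
    (C : Set (X × Y)) :
    BddAbove { v : ℝ | ∃ (tx : Fin (k + 1) → X) (ty : Fin (k + 1) → Y),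
      (∀ i, (tx i, ty i) ∈ C) ∧ v = |NX.r k tx - NY.r k ty| } := by
  refine ⟨1, ?_⟩
  rintro v ⟨tx, ty, -, rfl⟩
  have h1 := NX.r_nonneg k hk tx; have h2 := NX.r_le_one k hk tx
  have h3 := NY.r_nonneg k hk ty; have h4 := NY.r_le_one k hk ty
  rw [abs_sub_le_iff]; constructor <;> linarith

lemma gamma_le (NX : HONetwork K X) (NY : HONetwork K Y) {k : ℕ} (hk : k ≤ K)
    {C : Set (X × Y)} {tx : Fin (k + 1) → X} {ty : Fin (k + 1) → Y}
    (h : ∀ i, (tx i, ty i) ∈ C) :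
    |NX.r k tx - NY.r k ty| ≤ Gamma NX NY k C :=
  le_csSup (gamma_bddAbove NX NY hk C) ⟨tx, ty, h, rfl⟩

lemma pNorm_nonneg (p : ℝ≥0∞) [Fact (1 ≤ p)] (v : Fin (K + 1) → ℝ) : 0 ≤ pNorm K p v :=
  norm_nonneg _

lemma pNorm_eq_zero (p : ℝ≥0∞) [Fact (1 ≤ p)] {v : Fin (K + 1) → ℝ} :
    pNorm K p v = 0 ↔ v = 0 := by
  rw [pNorm, norm_eq_zero]
  constructor
  · intro h; have := congrArg (WithLp.equiv p (Fin (K + 1) → ℝ)) h; simpa using this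
  · rintro rfl; simp

lemma pNorm_mono (p : ℝ≥0∞) [Fact (1 ≤ p)] {u w : Fin (K + 1) → ℝ}
    (h : ∀ i, |u i| ≤ |w i|) : pNorm K p u ≤ pNorm K p w := by
  rw [pNorm, pNorm]
  rcases eq_or_ne p ⊤ with rfl | hp
  · rw [PiLp.norm_eq_ciSup, PiLp.norm_eq_ciSup]
    refine ciSup_mono (Set.Finite.bddAbove (Set.finite_range _)) fun i => ?_
    simpa [Real.norm_eq_abs] using h i
  · have h1 : (1 : ℝ≥0∞) ≤ p := Fact.out
    have hp0 : 0 < p.toReal := ENNReal.toReal_pos (zero_lt_one.trans_le h1).ne' hp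
    rw [PiLp.norm_eq_sum hp0, PiLp.norm_eq_sum hp0]
    gcongr with i
    · simpa [Real.norm_eq_abs] using h i

lemma pNorm_add_le (p : ℝ≥0∞) [Fact (1 ≤ p)] (u w : Fin (K + 1) → ℝ) :
    pNorm K p (u + w) ≤ pNorm K p u + pNorm K p w := by
  have : (WithLp.equiv p (Fin (K + 1) → ℝ)).symm (u + w)
      = (WithLp.equiv p (Fin (K + 1) → ℝ)).symm u + (WithLp.equiv p (Fin (K + 1) → ℝ)).symm w :=
    rfl
  rw [pNorm, pNorm, pNorm, this]
  exact norm_add_le _ _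

lemma corr_univ : IsCorrespondence (Set.univ : Set (X × Y)) :=
  ⟨fun x => ⟨Classical.arbitrary Y, trivial⟩, fun y => ⟨Classical.arbitrary X, trivial⟩⟩

lemma dNp_set_nonempty (p : ℝ≥0∞) [Fact (1 ≤ p)] (NX : HONetwork K X) (NY : HONetwork K Y) :
    { v : ℝ | ∃ C : Set (X × Y), IsCorrespondence C ∧
      v = pNorm K p (fun k : Fin (K + 1) => Gamma NX NY (k : ℕ) C) }.Nonempty :=
  ⟨_, Set.univ, corr_univ, rfl⟩

lemma dNp_set_finite (p : ℝ≥0∞) [Fact (1 ≤ p)] (NX : HONetwork K X) (NY : HONetwork K Y) :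
    { v : ℝ | ∃ C : Set (X × Y), IsCorrespondence C ∧
      v = pNorm K p (fun k : Fin (K + 1) => Gamma NX NY (k : ℕ) C) }.Finite := by
  have : { v : ℝ | ∃ C : Set (X × Y), IsCorrespondence C ∧
      v = pNorm K p (fun k : Fin (K + 1) => Gamma NX NY (k : ℕ) C) }
      ⊆ (fun C : Set (X × Y) => pNorm K p (fun k : Fin (K + 1) => Gamma NX NY (k : ℕ) C)) ''
        Set.univ := by
    rintro v ⟨C, -, rfl⟩; exact ⟨C, trivial, rfl⟩
  exact Set.Finite.subset (Set.Finite.image _ (Set.toFinite _)) this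

lemma dNp_set_bddBelow (p : ℝ≥0∞) [Fact (1 ≤ p)] (NX : HONetwork K X) (NY : HONetwork K Y) :
    BddBelow { v : ℝ | ∃ C : Set (X × Y), IsCorrespondence C ∧
      v = pNorm K p (fun k : Fin (K + 1) => Gamma NX NY (k : ℕ) C) } := by
  refine ⟨0, ?_⟩; rintro v ⟨C, -, rfl⟩; exact pNorm_nonneg p _

lemma dNp_nonneg (p : ℝ≥0∞) [Fact (1 ≤ p)] (NX : HONetwork K X) (NY : HONetwork K Y) :
    0 ≤ dNp p NX NY :=
  le_csInf (dNp_set_nonempty p NX NY) (by rintro v ⟨C, -, rfl⟩; exact pNorm_nonneg p _)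

lemma dNp_mem (p : ℝ≥0∞) [Fact (1 ≤ p)] (NX : HONetwork K X) (NY : HONetwork K Y) :
    ∃ C : Set (X × Y), IsCorrespondence C ∧
      dNp p NX NY = pNorm K p (fun k : Fin (K + 1) => Gamma NX NY (k : ℕ) C) :=
  Set.Nonempty.csInf_mem (dNp_set_nonempty p NX NY) (dNp_set_finite p NX NY)

end Aux
section Aux2
open Classical
variable {K : ℕ} {X Y Z : Type} [Fintype X] [Nonempty X] [Fintype Y] [Nonempty Y]
  [Fintype Z] [Nonempty Z]

lemma gamma_swap (NX : HONetwork K X) (NY : HONetwork K Y) (k : ℕ) (C : Set (X × Y)) :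
    Gamma NY NX k {yx : Y × X | (yx.2, yx.1) ∈ C} = Gamma NX NY k C := by
  unfold Gamma
  congr 1
  ext v
  constructor
  · rintro ⟨ty, tx, hm, rfl⟩
    exact ⟨tx, ty, fun i => hm i, (abs_sub_comm _ _)⟩
  · rintro ⟨tx, ty, hm, rfl⟩
    exact ⟨ty, tx, fun i => hm i, (abs_sub_comm _ _)⟩

lemma corr_swap {C : Set (X × Y)} (hC : IsCorrespondence C) :
    IsCorrespondence {yx : Y × X | (yx.2, yx.1) ∈ C} :=
  ⟨fun y => (hC.2 y).imp fun x hx => hx, fun x => (hC.1 x).imp fun y hy => hy⟩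

lemma dNp_symm (p : ℝ≥0∞) [Fact (1 ≤ p)] (NX : HONetwork K X) (NY : HONetwork K Y) :
    dNp p NX NY = dNp p NY NX := by
  unfold dNp
  congr 1
  ext v
  constructor
  · rintro ⟨C, hC, rfl⟩
    exact ⟨{yx : Y × X | (yx.2, yx.1) ∈ C}, corr_swap hC, by
      congr 1; funext k; rw [gamma_swap]⟩
  · rintro ⟨C, hC, rfl⟩
    refine ⟨{xy : X × Y | (xy.2, xy.1) ∈ C}, corr_swap hC, ?_⟩
    congr 1; funext k
    rw [← gamma_swap NY NX]

lemma corr_comp {C1 : Set (X × Z)} {C2 : Set (Z × Y)} (h1 : IsCorrespondence C1)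
    (h2 : IsCorrespondence C2) :
    IsCorrespondence {xy : X × Y | ∃ z : Z, (xy.1, z) ∈ C1 ∧ (z, xy.2) ∈ C2} := by
  constructor
  · intro x
    obtain ⟨z, hz⟩ := h1.1 x
    obtain ⟨y, hy⟩ := h2.1 z
    exact ⟨y, z, hz, hy⟩
  · intro y
    obtain ⟨z, hz⟩ := h2.2 y
    obtain ⟨x, hx⟩ := h1.2 z
    exact ⟨x, z, hx, hz⟩

lemma gamma_comp_le (NX : HONetwork K X) (NZ : HONetwork K Z) (NY : HONetwork K Y)
    {k : ℕ} (hk : k ≤ K) (C1 : Set (X × Z)) (C2 : Set (Z × Y)) :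
    Gamma NX NY k {xy : X × Y | ∃ z : Z, (xy.1, z) ∈ C1 ∧ (z, xy.2) ∈ C2} ≤
      Gamma NX NZ k C1 + Gamma NZ NY k C2 := by
  apply Real.sSup_le
  · rintro v ⟨tx, ty, hm, rfl⟩
    choose tz hz1 hz2 using hm
    calc |NX.r k tx - NY.r k ty|
        ≤ |NX.r k tx - NZ.r k tz| + |NZ.r k tz - NY.r k ty| := abs_sub_le _ _ _
      _ ≤ Gamma NX NZ k C1 + Gamma NZ NY k C2 :=
          add_le_add (gamma_le NX NZ hk hz1) (gamma_le NZ NY hk hz2)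
  · exact add_nonneg (gamma_nonneg _ _ _ _) (gamma_nonneg _ _ _ _)

lemma dNp_triangle (p : ℝ≥0∞) [Fact (1 ≤ p)] (NX : HONetwork K X) (NZ : HONetwork K Z)
    (NY : HONetwork K Y) : dNp p NX NY ≤ dNp p NX NZ + dNp p NZ NY := by
  obtain ⟨C1, hC1, e1⟩ := dNp_mem p NX NZ
  obtain ⟨C2, hC2, e2⟩ := dNp_mem p NZ NY
  set C : Set (X × Y) := {xy : X × Y | ∃ z : Z, (xy.1, z) ∈ C1 ∧ (z, xy.2) ∈ C2} with hCdef
  have hstep : pNorm K p (fun k : Fin (K + 1) => Gamma NX NY (k : ℕ) C)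
      ≤ dNp p NX NZ + dNp p NZ NY := by
    have hmono : pNorm K p (fun k : Fin (K + 1) => Gamma NX NY (k : ℕ) C)
        ≤ pNorm K p ((fun k : Fin (K + 1) => Gamma NX NZ (k : ℕ) C1) +
            (fun k : Fin (K + 1) => Gamma NZ NY (k : ℕ) C2)) := by
      apply pNorm_mono
      intro i
      have hiK : (i : ℕ) ≤ K := Nat.lt_succ_iff.mp i.isLt
      have h1 := gamma_comp_le NX NZ NY hiK C1 C2
      have g0 := gamma_nonneg NX NY (i : ℕ) C
      have g1 := gamma_nonneg NX NZ (i : ℕ) C1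
      have g2 := gamma_nonneg NZ NY (i : ℕ) C2
      rw [abs_of_nonneg g0, Pi.add_apply, abs_of_nonneg (add_nonneg g1 g2)]
      exact h1
    refine hmono.trans ?_
    rw [e1, e2]
    exact pNorm_add_le p _ _
  refine le_trans (csInf_le (dNp_set_bddBelow p NX NY) ⟨C, corr_comp hC1 hC2, rfl⟩) hstep

lemma dNp_eq_zero_of_iso (p : ℝ≥0∞) [Fact (1 ≤ p)] {NX : HONetwork K X} {NY : HONetwork K Y}
    (h : Isomorphic NX NY) : dNp p NX NY = 0 := by
  obtain ⟨φ, hφ⟩ := h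
  set C : Set (X × Y) := {xy : X × Y | xy.2 = φ xy.1} with hCdef
  have hC : IsCorrespondence C := ⟨fun x => ⟨φ x, rfl⟩, fun y => ⟨φ.symm y, by simp [hCdef]⟩⟩
  have hgam : ∀ k : ℕ, k ≤ K → Gamma NX NY k C = 0 := by
    intro k hk
    refine le_antisymm ?_ (gamma_nonneg _ _ _ _)
    apply Real.sSup_le _ le_rfl
    rintro v ⟨tx, ty, hm, rfl⟩
    have hty : ty = fun i => φ (tx i) := funext fun i => hm i
    rw [hty, hφ k hk tx, sub_self, abs_zero]
  refine le_antisymm ?_ (dNp_nonneg p NX NY)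
  have hmem : pNorm K p (fun k : Fin (K + 1) => Gamma NX NY (k : ℕ) C) = 0 := by
    rw [pNorm_eq_zero]
    funext k
    exact hgam (k : ℕ) (Nat.lt_succ_iff.mp k.isLt)
  calc dNp p NX NY ≤ pNorm K p (fun k : Fin (K + 1) => Gamma NX NY (k : ℕ) C) :=
        csInf_le (dNp_set_bddBelow p NX NY) ⟨C, hC, rfl⟩
    _ = 0 := hmem

end Aux2
section Aux3
open Classical
variable {K : ℕ} {X Y : Type} [Fintype X] [Nonempty X] [Fintype Y] [Nonempty Y]

lemma right_unique_of_zero (hK : 1 ≤ K) (NX : HONetwork K X) (DY : DissimNetwork K Y)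
    (C : Set (X × Y))
    (hG : ∀ k : ℕ, k ≤ K → ∀ (tx : Fin (k + 1) → X) (ty : Fin (k + 1) → Y),
      (∀ i, (tx i, ty i) ∈ C) → NX.r k tx = DY.r k ty)
    {x : X} {y y' : Y} (h1 : (x, y) ∈ C) (h2 : (x, y') ∈ C) : y = y' := by
  by_contra hne
  set tx0 : Fin 1 → X := fun _ => x with htx0
  set ty0 : Fin 1 → Y := fun _ => y with hty0
  set tx1 : Fin 2 → X := fun _ => x with htx1
  set ty1 : Fin 2 → Y := fun i => if i = 0 then y else y' with hty1
  -- Γ^0 = 0 : r_X^0(x) = r_Y^0(y)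
  have h0 : NX.r 0 tx0 = DY.r 0 ty0 := hG 0 (Nat.zero_le K) tx0 ty0 fun i => h1
  -- Γ^1 = 0 : r_X^1(x,x) = r_Y^1(y,y')
  have hmem1 : ∀ i : Fin 2, (tx1 i, ty1 i) ∈ C := by
    intro i
    by_cases hi : i = 0 <;> simp [htx1, hty1, hi, h1, h2]
  have h1r : NX.r 1 tx1 = DY.r 1 ty1 := hG 1 hK tx1 ty1 hmem1
  -- identity: r_X^1(x,x) = r_X^0(x)
  have hι : StrictMono (fun _ : Fin 1 => (0 : Fin 2)) := fun a b hab =>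
    absurd (Subsingleton.elim a b) hab.ne
  have hid : NX.r 0 (tx1 ∘ fun _ : Fin 1 => (0 : Fin 2)) = NX.r 1 tx1 := by
    apply NX.identity 1 hK 0 (Nat.zero_le K) tx1 _ hι
    show Set.range (fun _ : Fin 1 => x) = Set.range (fun _ : Fin 2 => x)
    rw [Set.range_const, Set.range_const]
  have hcomp : (tx1 ∘ fun _ : Fin 1 => (0 : Fin 2)) = tx0 := rfl
  rw [hcomp] at hid
  -- ranks
  have hrank0 : tupleRank ty0 = 1 := by
    rw [tupleRank, hty0, Set.range_const, Set.ncard_singleton]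
  have hrange1 : Set.range ty1 = {y, y'} := by
    ext b
    constructor
    · rintro ⟨i, rfl⟩
      by_cases hi : i = 0 <;> simp [hty1, hi]
    · intro hb
      rcases hb with rfl | rfl
      · exact ⟨0, by simp [hty1]⟩
      · exact ⟨1, by simp [hty1]⟩
  have hrank1 : tupleRank ty1 = 2 := by
    rw [tupleRank, hrange1, Set.ncard_pair hne]
  -- decompositions
  have hd0 := DY.decomp 0 (Nat.zero_le K) ty0
  have hd1 := DY.decomp 1 hK ty1
  rw [hrank0] at hd0
  rw [hrank1] at hd1
  -- order increasing
  have hoi := DY.order_incr 0 hK ty1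
  have hcast : (fun i : Fin 1 => ty1 i.castSucc) = ty0 := by
    funext i
    have : i.castSucc = (0 : Fin 2) := by
      have : i = 0 := Subsingleton.elim i 0
      subst this; rfl
    rw [this]; simp [hty1, hty0]
  rw [hcast] at hoi
  have heps := DY.eps_pos
  -- combine: d1 + 2ε = d0 + ε with d0 ≤ d1
  have : DY.r 1 ty1 = DY.r 0 ty0 := by rw [← h1r, ← h0, hid]
  rw [hd0, hd1] at this
  push_cast at this
  linarith

end Aux3
section Aux4
open Classical
variable {K : ℕ} {X Y : Type} [Fintype X] [Nonempty X] [Fintype Y] [Nonempty Y]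

lemma iso_of_dNp_eq_zero (hK : 1 ≤ K) (p : ℝ≥0∞) [Fact (1 ≤ p)]
    (DX : DissimNetwork K X) (DY : DissimNetwork K Y)
    (h : dNp p DX.toHONetwork DY.toHONetwork = 0) :
    Isomorphic DX.toHONetwork DY.toHONetwork := by
  obtain ⟨C, hC, heq⟩ := dNp_mem p DX.toHONetwork DY.toHONetwork
  rw [h] at heq
  have hvec : (fun k : Fin (K + 1) =>
      Gamma DX.toHONetwork DY.toHONetwork (k : ℕ) C) = 0 :=
    (pNorm_eq_zero p).mp heq.symm
  have hgam : ∀ k : ℕ, k ≤ K → Gamma DX.toHONetwork DY.toHONetwork k C = 0 := by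
    intro k hk
    have := congrFun hvec ⟨k, Nat.lt_succ_of_le hk⟩
    simpa using this
  have hG : ∀ k : ℕ, k ≤ K → ∀ (tx : Fin (k + 1) → X) (ty : Fin (k + 1) → Y),
      (∀ i, (tx i, ty i) ∈ C) → DX.r k tx = DY.r k ty := by
    intro k hk tx ty hm
    have hle := gamma_le DX.toHONetwork DY.toHONetwork hk hm
    rw [hgam k hk] at hle
    have := abs_nonneg (DX.r k tx - DY.r k ty)
    have habs : |DX.r k tx - DY.r k ty| = 0 := le_antisymm hle this
    have := abs_eq_zero.mp habs
    linarith
  -- right uniqueness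
  have hru : ∀ {x : X} {y y' : Y}, (x, y) ∈ C → (x, y') ∈ C → y = y' :=
    fun {x y y'} h1 h2 => right_unique_of_zero hK DX.toHONetwork DY C hG h1 h2
  -- left uniqueness via the swapped correspondence
  have hlu : ∀ {x x' : X} {y : Y}, (x, y) ∈ C → (x', y) ∈ C → x = x' := by
    intro x x' y h1 h2
    refine right_unique_of_zero hK DY.toHONetwork DX {yx : Y × X | (yx.2, yx.1) ∈ C}
      ?_ h1 h2
    intro k hk ty tx hm
    exact (hG k hk tx ty fun i => hm i).symm
  -- the bijection
  have hex : ∀ x : X, (x, Classical.choose (hC.1 x)) ∈ C := fun x =>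
    Classical.choose_spec (hC.1 x)
  set φ0 : X → Y := fun x => Classical.choose (hC.1 x) with hφ0
  have hinj : Function.Injective φ0 := by
    intro a b hab
    have hb : (b, φ0 a) ∈ C := by rw [hab]; exact hex b
    exact hlu (hex a) hb
  have hsurj : Function.Surjective φ0 := by
    intro y
    obtain ⟨x, hx⟩ := hC.2 y
    exact ⟨x, hru (hex x) hx⟩
  refine ⟨Equiv.ofBijective φ0 ⟨hinj, hsurj⟩, ?_⟩
  intro k hk t
  exact (hG k hk t (fun i => φ0 (t i)) fun i => hex (t i)).symm

end Aux4
-- main theorem body test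
/-- for `K ≥ 1` and `1 ≤ p ≤ ∞`, the `p`-norm network distance restricted to
`K`-order dissimilarity networks is a metric modulo isomorphism. -/
theorem dDp_metric (K : ℕ) (hK : 1 ≤ K) (p : ℝ≥0∞) [Fact (1 ≤ p)]
    (X Y Z : Type) [Fintype X] [Nonempty X] [Fintype Y] [Nonempty Y] [Fintype Z] [Nonempty Z]
    (DX : DissimNetwork K X) (DY : DissimNetwork K Y) (DZ : DissimNetwork K Z) :
    0 ≤ dNp p DX.toHONetwork DY.toHONetwork ∧
    dNp p DX.toHONetwork DY.toHONetwork = dNp p DY.toHONetwork DX.toHONetwork ∧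
    dNp p DX.toHONetwork DY.toHONetwork ≤
      dNp p DX.toHONetwork DZ.toHONetwork + dNp p DZ.toHONetwork DY.toHONetwork ∧
    (dNp p DX.toHONetwork DY.toHONetwork = 0 ↔
      Isomorphic DX.toHONetwork DY.toHONetwork) := by
  refine ⟨dNp_nonneg p _ _, dNp_symm p _ _, dNp_triangle p _ _ _, ?_, ?_⟩
  · exact fun h => iso_of_dNp_eq_zero hK p DX DY h
  · exact fun h => dNp_eq_zero_of_iso p h
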